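/- arXiv:1709.07130 — 8 statements merged into one kernel-verified Lean document; each statement's English description precedes it below -/
import Mathlib

section
/- Let x solve x''(t) = x'(t)(βq s(t) - 1) with s(t) = N - x(t)/q, x(0) = x0 where 0 < x0 < qN, and x'(0) = βq x0 (N - x0/q) > 0. Define φ = sqrt((βqN - 1)² - (βx0 - 1)² + 1), x1 = qN + (φ-1)/β, x2 = qN + (-φ-1)/β, g(t) = ((x1 - x0)/(x0 - x2)) e^{-φt}. Then x(t) = (x1 + g(t) x2)/(1 + g(t)) satisfies the ODE and the initial conditions. -/
theorem wmodel_solution (β q N x0 : ℝ)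
    (hβ : 0 < β) (hq0 : 0 < q) (hq1 : q < 1) (hN : 0 < N)
    (hx0 : 0 < x0) (hx0N : x0 < q * N)
    (harg : 0 < (β * q * N - 1)^2 - (β * x0 - 1)^2 + 1)
    (φ x1 x2 : ℝ) (g x : ℝ → ℝ)
    (hφ : φ = Real.sqrt ((β * q * N - 1)^2 - (β * x0 - 1)^2 + 1))
    (hx1 : x1 = q * N + (φ - 1) / β)
    (hx2 : x2 = q * N + (-φ - 1) / β)
    (hg : ∀ t, g t = (x1 - x0) / (x0 - x2) * Real.exp (-φ * t))
    (hx : ∀ t, x t = (x1 + g t * x2) / (1 + g t)) :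
    x 0 = x0 ∧
    deriv x 0 = β * q * x0 * (N - x0 / q) ∧
    (∀ t, HasDerivAt (deriv x) (deriv x t * (β * q * (N - x t / q) - 1)) t) := by
  have hβ' : β ≠ 0 := hβ.ne'
  have hq' : q ≠ 0 := hq0.ne'
  have hφ2 : φ ^ 2 = (β * q * N - 1)^2 - (β * x0 - 1)^2 + 1 := by
    rw [hφ]; exact Real.sq_sqrt harg.le
  have hφpos : 0 < φ := by rw [hφ]; exact Real.sqrt_pos.mpr harg
  have hu : 0 < β * (q * N - x0) := mul_pos hβ (by linarith)
  have hv : 0 < β * x0 := mul_pos hβ hx0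
  have huv := mul_pos hu hv
  have hx10 : 0 < x1 - x0 := by
    have h1 : x1 - x0 = (β * (q * N - x0) + φ - 1) / β := by
      rw [hx1]; field_simp; ring
    rw [h1]
    apply div_pos _ hβ
    nlinarith [hφ2, hφpos, huv]
  have hx02 : 0 < x0 - x2 := by
    have h1 : x0 - x2 = (β * (x0 - q * N) + φ + 1) / β := by
      rw [hx2]; field_simp; ring
    rw [h1]
    apply div_pos _ hβ
    nlinarith [hφ2, hφpos, huv]
  have hx02' : x0 - x2 ≠ 0 := hx02.ne'
  have hcpos : 0 < (x1 - x0) / (x0 - x2) := div_pos hx10 hx02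
  have hgpos : ∀ t, 0 < g t := fun t => by
    rw [hg t]; exact mul_pos hcpos (Real.exp_pos _)
  have h1g : ∀ t, 0 < 1 + g t := fun t => by linarith [hgpos t]
  have h1g' : ∀ t, 1 + g t ≠ 0 := fun t => (h1g t).ne'
  have hx12 : x1 - x2 = 2 * φ / β := by
    rw [hx1, hx2]; field_simp; ring
  have hbx1 : β * x1 = β * q * N + φ - 1 := by rw [hx1]; field_simp; ring
  have hbx2 : β * x2 = β * q * N - φ - 1 := by rw [hx2]; field_simp; ring
  have hprod : (β * x1 - β * x0) * (β * x0 - β * x2)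
      = 2 * (β * (q * N) - β * x0) * (β * x0) := by
    rw [hbx1, hbx2]; linear_combination hφ2
  have hprod2 : (x1 - x0) * (x0 - x2) = 2 * (q * N - x0) * x0 := by
    have h : β ^ 2 * ((x1 - x0) * (x0 - x2)) = β ^ 2 * (2 * (q * N - x0) * x0) := by
      linear_combination hprod
    exact mul_left_cancel₀ (pow_ne_zero 2 hβ') h
  -- derivative of g
  have hg' : ∀ t, HasDerivAt g (-φ * g t) t := by
    intro t
    have h1 : HasDerivAt (fun s : ℝ => -φ * s) (-φ) t := by
      simpa using (hasDerivAt_id t).const_mul (-φ)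
    have h2 : HasDerivAt (fun s : ℝ => Real.exp (-φ * s))
        (Real.exp (-φ * t) * -φ) t := h1.exp
    have h3 := h2.const_mul ((x1 - x0) / (x0 - x2))
    have hgfun : g = fun s => (x1 - x0) / (x0 - x2) * Real.exp (-φ * s) :=
      funext hg
    rw [hgfun]
    refine h3.congr_deriv ?_
    ring
  have hxfun : x = fun s => (x1 + g s * x2) / (1 + g s) := funext hx
  -- first derivative of x
  have hx' : ∀ t, HasDerivAt x (φ * g t * (x1 - x2) / (1 + g t)^2) t := by
    intro t
    have num : HasDerivAt (fun s => x1 + g s * x2) (-φ * g t * x2) t :=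
      ((hg' t).mul_const x2).const_add x1
    have den : HasDerivAt (fun s => 1 + g s) (-φ * g t) t := (hg' t).const_add 1
    have h := num.div den (h1g' t)
    rw [hxfun]
    refine h.congr_deriv ?_
    field_simp
    ring
  have hderiv : deriv x = fun t => φ * g t * (x1 - x2) / (1 + g t)^2 :=
    funext fun t => (hx' t).deriv
  refine ⟨?_, ?_, ?_⟩
  · rw [hx 0, hg 0]
    rw [mul_zero, Real.exp_zero, mul_one]
    rw [div_eq_iff (by positivity : (1:ℝ) + (x1 - x0) / (x0 - x2) ≠ 0)]
    field_simp
    ring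
  · rw [hderiv]
    simp only []
    rw [hg 0, mul_zero, Real.exp_zero, mul_one]
    have hφ' : φ ≠ 0 := hφpos.ne'
    have h1c : 1 + (x1 - x0) / (x0 - x2) = (x1 - x2) / (x0 - x2) := by
      field_simp
      ring
    have e1 : φ * ((x1 - x0) / (x0 - x2)) * (x1 - x2) / (1 + (x1 - x0) / (x0 - x2))^2
        = β * (x1 - x0) * (x0 - x2) / 2 := by
      rw [h1c, hx12]
      field_simp
    rw [e1]
    field_simp
    linear_combination hprod2
  · intro t
    rw [hderiv]
    have num2 : HasDerivAt (fun s => φ * g s * (x1 - x2))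
        (φ * (-φ * g t) * (x1 - x2)) t := ((hg' t).const_mul φ).mul_const (x1 - x2)
    have den2 : HasDerivAt (fun s => (1 + g s)^2)
        ((2 : ℕ) * (1 + g t)^(2-1) * (-φ * g t)) t := ((hg' t).const_add 1).pow 2
    have h := num2.div den2 (pow_ne_zero 2 (h1g' t))
    have hode : β * q * (N - x t / q) - 1 = φ * (g t - 1) / (1 + g t) := by
      have hne := h1g' t
      rw [hx t]
      field_simp
      linear_combination (-1) * hbx1 + (-g t) * hbx2
    refine h.congr_deriv ?_
    rw [hode]
    have hne := h1g' t
    field_simp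
    ring
end

section
/- Let φ = sqrt((βqN - 1)² - (βx0 - 1)² + 1) and x1 = qN + (φ - 1)/β with β > 0, q ∈ (0,1), N > 0, 0 < x0 < qN, and βx0 < 1. Then x1 ≥ qN if and only if β ≥ 2/(qN + x0). -/
theorem wmodel_threshold (β q N x0 φ x1 : ℝ)
    (hβ : 0 < β) (hq0 : 0 < q) (hq1 : q < 1) (hN : 0 < N)
    (hx0 : 0 < x0) (hx0N : x0 < q * N) (hβx0 : β * x0 < 1)
    (harg : 0 ≤ (β * q * N - 1)^2 - (β * x0 - 1)^2 + 1)
    (hφ : φ = Real.sqrt ((β * q * N - 1)^2 - (β * x0 - 1)^2 + 1))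
    (hx1 : x1 = q * N + (φ - 1) / β) :
    q * N ≤ x1 ↔ 2 / (q * N + x0) ≤ β := by
  have hsum : 0 < q * N + x0 := by linarith
  have h1 : q * N ≤ x1 ↔ 1 ≤ φ := by
    rw [hx1]
    constructor
    · intro h
      have : 0 ≤ (φ - 1) / β := by linarith
      have := (div_nonneg_iff.mp this)
      rcases this with ⟨h1, _⟩ | ⟨_, h2⟩
      · linarith
      · linarith
    · intro h
      have : 0 ≤ (φ - 1) / β := div_nonneg (by linarith) hβ.le
      linarith
  have h2 : (1 : ℝ) ≤ φ ↔ 1 ≤ (β * q * N - 1)^2 - (β * x0 - 1)^2 + 1 := by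
    rw [hφ]
    constructor
    · intro h
      have := Real.sq_sqrt harg
      nlinarith [Real.sqrt_nonneg ((β * q * N - 1)^2 - (β * x0 - 1)^2 + 1)]
    · intro h
      exact Real.one_le_sqrt.mpr (by linarith)
  have h3 : (1 : ℝ) ≤ (β * q * N - 1)^2 - (β * x0 - 1)^2 + 1 ↔ 2 ≤ β * (q * N + x0) := by
    constructor
    · intro h
      nlinarith [mul_pos hβ (by linarith : (0:ℝ) < q * N - x0)]
    · intro h
      nlinarith [mul_pos hβ (by linarith : (0:ℝ) < q * N - x0)]
  rw [h1, h2, h3, div_le_iff₀ hsum]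
end

section
/- Let x1(x0) = qN + (sqrt((βqN-1)² - (βx0-1)² + 1) - 1)/β with β > 0, 0 < x0 < qN, βx0 < 1, βqN > 1, and β < 2/(qN + x0). Then ∂x1/∂x0 = (1 - βx0)/sqrt((βqN-1)² - (βx0-1)² + 1) > 0, i.e. x1 is strictly increasing in x0. -/
theorem wmodel_x1_increasing_in_x0 (β q N x0 : ℝ)
    (hβ : 0 < β) (hq0 : 0 < q) (hq1 : q < 1) (hN : 0 < N)
    (hx0 : 0 < x0) (hx0N : x0 < q * N) (hβx0 : β * x0 < 1) (hβqN : 1 < β * q * N)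
    (hβsmall : β < 2 / (q * N + x0))
    (harg : 0 < (β * q * N - 1)^2 - (β * x0 - 1)^2 + 1) :
    HasDerivAt (fun a => q * N + (Real.sqrt ((β * q * N - 1)^2 - (β * a - 1)^2 + 1) - 1) / β)
      ((1 - β * x0) / Real.sqrt ((β * q * N - 1)^2 - (β * x0 - 1)^2 + 1)) x0 ∧
    0 < (1 - β * x0) / Real.sqrt ((β * q * N - 1)^2 - (β * x0 - 1)^2 + 1) := by
  have hs : 0 < Real.sqrt ((β * q * N - 1)^2 - (β * x0 - 1)^2 + 1) := Real.sqrt_pos.mpr harg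
  constructor
  · have hg : HasDerivAt (fun a : ℝ => (β * q * N - 1)^2 - (β * a - 1)^2 + 1)
        (-(2 * (β * x0 - 1)) * β) x0 := by
      have h1 : HasDerivAt (fun a : ℝ => β * a - 1) β x0 := by
        simpa using (hasDerivAt_id x0).const_mul β |>.sub_const 1
      have h2 := (h1.pow 2)
      have : HasDerivAt (fun a : ℝ => (β * q * N - 1)^2 - (β * a - 1)^2 + 1)
          (0 - (2:ℕ) * (β * x0 - 1)^(2-1) * β) x0 :=
        ((hasDerivAt_const x0 ((β * q * N - 1)^2)).sub h2).add_const 1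
      simpa using this
    have hsq := hg.sqrt (ne_of_gt harg)
    have hfinal := ((hsq.sub_const 1).div_const β).const_add (q * N)
    convert hfinal using 1
    · rfl
    · rfl
    field_simp
    ring
  · exact div_pos (by linarith) hs
end

section
/- Let φ(x0) = sqrt((βqN-1)² - (βx0-1)² + 1) and x1(x0) = qN + (φ(x0)-1)/β with β > 0, βqN > 1, βx0 < 1, and φ(x0) > 0. Then ∂²x1/∂x0² = -β((βqN-1)² + 1)/φ(x0)³ < 0, i.e. x1 is a strictly concave function of x0. -/
theorem wmodel_x1_concave_in_x0 (β q N x0 : ℝ)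
    (hβ : 0 < β) (hβqN : 1 < β * q * N) (hβx0 : β * x0 < 1)
    (hφpos : 0 < Real.sqrt ((β * q * N - 1)^2 - (β * x0 - 1)^2 + 1)) :
    deriv (deriv (fun a => q * N + (Real.sqrt ((β * q * N - 1)^2 - (β * a - 1)^2 + 1) - 1) / β)) x0
      = -β * ((β * q * N - 1)^2 + 1) / (Real.sqrt ((β * q * N - 1)^2 - (β * x0 - 1)^2 + 1))^3 ∧
    -β * ((β * q * N - 1)^2 + 1) / (Real.sqrt ((β * q * N - 1)^2 - (β * x0 - 1)^2 + 1))^3 < 0 := by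
  set K := (β * q * N - 1)^2 with hK
  set g : ℝ → ℝ := fun a => K - (β * a - 1)^2 + 1 with hg
  have hgx0 : 0 < g x0 := Real.sqrt_pos.mp hφpos
  have hβne : β ≠ 0 := ne_of_gt hβ
  have hgcont : Continuous g := by fun_prop
  have hev : ∀ᶠ a in nhds x0, 0 < g a :=
    (hgcont.continuousAt).eventually (eventually_gt_nhds hgx0)
  have hgd : ∀ a : ℝ, HasDerivAt g (-2*β*(β*a-1)) a := by
    intro a
    have h1 : HasDerivAt (fun a : ℝ => β * a - 1) β a := by
      simpa using ((hasDerivAt_id a).const_mul β).sub_const 1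
    have h2 := h1.pow 2
    have h3 := ((h2.const_sub K).add_const 1)
    exact h3.congr_deriv (by norm_num; ring)
  -- derivative of f
  have hfd : ∀ a : ℝ, 0 < g a →
      HasDerivAt (fun a => q * N + (Real.sqrt ((β * q * N - 1)^2 - (β * a - 1)^2 + 1) - 1) / β)
        (-(β*a-1) / Real.sqrt (g a)) a := by
    intro a ha
    have hsq : HasDerivAt (fun a => Real.sqrt (g a))
        (1 / (2 * Real.sqrt (g a)) * (-2*β*(β*a-1))) a :=
      (Real.hasDerivAt_sqrt (ne_of_gt ha)).comp a (hgd a)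
    have h := ((hsq.sub_const 1).div_const β).const_add (q * N)
    have hsne : Real.sqrt (g a) ≠ 0 := ne_of_gt (Real.sqrt_pos.mpr ha)
    exact h.congr_deriv (by field_simp)
  have hd1 : (deriv (fun a => q * N + (Real.sqrt ((β * q * N - 1)^2 - (β * a - 1)^2 + 1) - 1) / β))
      =ᶠ[nhds x0] (fun a => -(β*a-1) / Real.sqrt (g a)) :=
    hev.mono fun a ha => (hfd a ha).deriv
  rw [hd1.deriv_eq]
  set s := Real.sqrt (g x0) with hs
  have hspos : 0 < s := Real.sqrt_pos.mpr hgx0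
  have hsne : s ≠ 0 := ne_of_gt hspos
  have hs2 : s ^ 2 = g x0 := Real.sq_sqrt (le_of_lt hgx0)
  have hn : HasDerivAt (fun a : ℝ => -(β*a-1)) (-β) x0 := by
    exact (((hasDerivAt_id x0).const_mul β).sub_const 1).neg.congr_deriv (by simp)
  have hsq : HasDerivAt (fun a => Real.sqrt (g a)) (1 / (2 * s) * (-2*β*(β*x0-1))) x0 :=
    (Real.hasDerivAt_sqrt (ne_of_gt hgx0)).comp x0 (hgd x0)
  have hdiv := hn.div hsq hsne
  constructor
  · rw [show (fun a => -(β*a-1) / Real.sqrt (g a)) = ((fun a => -(β*a-1)) / fun a => Real.sqrt (g a)) from rfl]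
    rw [hdiv.deriv]
    have hgval : g x0 = K - (β * x0 - 1)^2 + 1 := rfl
    rw [show Real.sqrt (g x0) = s from rfl]
    rw [div_eq_div_iff (by positivity) (by positivity)]
    have hs2' : s^2 = (β*q*N-1)^2 - (β*x0-1)^2 + 1 := by
      rw [hs2, hgval, hK]
    field_simp
    linear_combination (-1 : ℝ) * hs2'
  · apply div_neg_of_neg_of_pos
    · nlinarith [sq_nonneg (β * q * N - 1)]
    · positivity
end

section
/- Fix q ∈ (0,1), N > 0 and 0 < x0 < qN with qN + x0 > 0. Let x1(β) = qN + (sqrt((βqN-1)² - (βx0-1)² + 1) - 1)/β for β ∈ (0, 2/(qN+x0)). Then x1 is strictly increasing in β on this interval. -/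
theorem wmodel_x1_increasing_in_beta (q N x0 : ℝ)
    (hq0 : 0 < q) (hq1 : q < 1) (hN : 0 < N)
    (hx0 : 0 < x0) (hx0N : x0 < q * N)
    (harg : ∀ β ∈ Set.Ioo (0:ℝ) (2 / (q * N + x0)),
      0 < (β * q * N - 1)^2 - (β * x0 - 1)^2 + 1) :
    StrictMonoOn (fun β => q * N + (Real.sqrt ((β * q * N - 1)^2 - (β * x0 - 1)^2 + 1) - 1) / β)
      (Set.Ioo (0:ℝ) (2 / (q * N + x0))) := by
  apply strictMonoOn_of_deriv_pos (convex_Ioo _ _)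
  · apply ContinuousOn.add continuousOn_const
    apply ContinuousOn.div
    · apply ContinuousOn.sub _ continuousOn_const
      exact (Real.continuous_sqrt.comp (by continuity)).continuousOn
    · exact continuousOn_id
    · intro x hx; exact ne_of_gt hx.1
  · intro β hβ
    rw [interior_Ioo] at hβ
    have hβ0 : 0 < β := hβ.1
    have hP : 0 < (β * q * N - 1)^2 - (β * x0 - 1)^2 + 1 := harg β hβ
    set P : ℝ := (β * q * N - 1)^2 - (β * x0 - 1)^2 + 1 with hPdef
    set P' : ℝ := 2 * (β * q * N - 1) * (q * N) - 2 * (β * x0 - 1) * x0 with hP'def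
    set S : ℝ := Real.sqrt P with hSdef
    have hS0 : 0 < S := Real.sqrt_pos.mpr hP
    have hS2 : S ^ 2 = P := Real.sq_sqrt hP.le
    -- derivative computation
    have h1 : HasDerivAt (fun b => (b * q * N - 1)^2 - (b * x0 - 1)^2 + 1) P' β := by
      have ha : HasDerivAt (fun b : ℝ => (b * q * N - 1)^2)
          (2 * (β * q * N - 1) * (q * N)) β := by
        have := (((hasDerivAt_id β).mul_const (q * N)).sub_const 1).pow 2
        simpa [mul_comm, mul_assoc, mul_left_comm, Pi.pow_def] using this
      have hb : HasDerivAt (fun b : ℝ => (b * x0 - 1)^2)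
          (2 * (β * x0 - 1) * x0) β := by
        have := (((hasDerivAt_id β).mul_const x0).sub_const 1).pow 2
        simpa [mul_comm, mul_assoc, mul_left_comm, Pi.pow_def] using this
      exact (ha.sub hb).add_const 1
    have hsq : HasDerivAt (fun b => Real.sqrt ((b * q * N - 1)^2 - (b * x0 - 1)^2 + 1))
        (P' / (2 * S)) β := h1.sqrt hP.ne'
    have hnum : HasDerivAt (fun b => Real.sqrt ((b * q * N - 1)^2 - (b * x0 - 1)^2 + 1) - 1)
        (P' / (2 * S)) β := hsq.sub_const 1
    have hdiv : HasDerivAt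
        (fun b => (Real.sqrt ((b * q * N - 1)^2 - (b * x0 - 1)^2 + 1) - 1) / b)
        ((P' / (2 * S) * β - (S - 1) * 1) / β ^ 2) β := by
      exact hnum.div (hasDerivAt_id β) hβ0.ne'
    have hF : HasDerivAt
        (fun b => q * N + (Real.sqrt ((b * q * N - 1)^2 - (b * x0 - 1)^2 + 1) - 1) / b)
        ((P' / (2 * S) * β - (S - 1) * 1) / β ^ 2) β := by
      simpa using (hdiv.const_add (q * N))
    rw [hF.deriv]
    -- positivity
    apply div_pos _ (by positivity)
    have key : 1 - β * (q * N - x0) < S := by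
      rcases le_or_gt (1 - β * (q * N - x0)) 0 with h | h
      · linarith
      · have hsq' : (1 - β * (q * N - x0))^2 < P := by
          have : P - (1 - β * (q * N - x0))^2 = 2 * x0 * (q * N - x0) * β^2 := by
            rw [hPdef]; ring
          have hd : 0 < q * N - x0 := by linarith
          have hpos : (0:ℝ) < 2 * x0 * (q * N - x0) * β ^ 2 := by positivity
          linarith
        nlinarith [hS2, hS0]
    have identity : 2 * P - P' * β = 2 - 2 * β * (q * N - x0) := by
      rw [hPdef, hP'def]; ring
    have hnumpos : (S - 1) * (2 * S) < P' * β := by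
      have h2 : (S - 1) * (2 * S) = 2 * P - 2 * S := by
        nlinarith [hS2]
      linarith
    rw [mul_one, sub_pos]
    rw [div_mul_eq_mul_div, lt_div_iff₀ (by positivity)]
    linarith
end

section
/- Fix q ∈ (0,1), N > 0, 0 < x0 < qN. There exists θ with 1/(qN+x0) < θ < 2/(qN+x0) such that the function x1(β) = qN + (sqrt((βqN-1)² - (βx0-1)² + 1) - 1)/β is convex on (0, θ] and concave on [θ, 2/(qN+x0)). -/
noncomputable section
namespace WModelAux

def pp (c s β : ℝ) : ℝ := c*s*β^2 - 2*c*β + 1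
def uu (c s β : ℝ) : ℝ := Real.sqrt (pp c s β)
def ff (a c s β : ℝ) : ℝ := a + (uu c s β - 1)/β
def f1 (c s β : ℝ) : ℝ := (c*(s*β-1)*β/uu c s β - (uu c s β - 1))/β^2
def f2 (c s β : ℝ) : ℝ :=
  (β^2*(c*(s-c))/(uu c s β)^3 - 2*β*(c*(s*β-1))/uu c s β + 2*(uu c s β - 1))/β^3

lemma pp_pos {c s : ℝ} (hc : 0 < c) (hcs : c < s) (β : ℝ) : 0 < pp c s β := by
  have hs : 0 < s := hc.trans hcs
  have h1 : 0 < s * pp c s β := by unfold pp; nlinarith [sq_nonneg (s*β - 1)]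
  nlinarith [h1]

lemma uu_pos {c s : ℝ} (hc : 0 < c) (hcs : c < s) (β : ℝ) : 0 < uu c s β :=
  Real.sqrt_pos.mpr (pp_pos hc hcs β)

lemma uu_sq {c s : ℝ} (hc : 0 < c) (hcs : c < s) (β : ℝ) : uu c s β ^ 2 = pp c s β :=
  Real.sq_sqrt (pp_pos hc hcs β).le

lemma hasDerivAt_pp (c s β : ℝ) : HasDerivAt (fun x => pp c s x) (2*c*s*β - 2*c) β := by
  have h := (((hasDerivAt_pow 2 β).const_mul (c*s)).sub ((hasDerivAt_id β).const_mul (2*c))).add_const 1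
  refine h.congr_deriv ?_; push_cast; ring

lemma hasDerivAt_uu {c s : ℝ} (hc : 0 < c) (hcs : c < s) (β : ℝ) :
    HasDerivAt (fun x => uu c s x) ((2*c*s*β - 2*c) / (2 * uu c s β)) β :=
  (hasDerivAt_pp c s β).sqrt (pp_pos hc hcs β).ne'

lemma hasDerivAt_ff {a c s β : ℝ} (hc : 0 < c) (hcs : c < s) (hβ : β ≠ 0) :
    HasDerivAt (fun x => ff a c s x) (f1 c s β) β := by
  have hu := uu_pos hc hcs β
  have h := (((hasDerivAt_uu hc hcs β).sub_const 1).div (hasDerivAt_id β) hβ).const_add a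
  refine h.congr_deriv ?_
  simp only [id_eq]
  unfold f1
  field_simp

lemma hasDerivAt_f1 {c s β : ℝ} (hc : 0 < c) (hcs : c < s) (hβ : β ≠ 0) :
    HasDerivAt (fun x => f1 c s x) (f2 c s β) β := by
  have hu := uu_pos hc hcs β
  have hA : HasDerivAt (fun x => c*(s*x-1)*x) (c*s*β + c*(s*β-1)) β := by
    have h := ((((hasDerivAt_id β).const_mul s).sub_const 1).const_mul c).mul (hasDerivAt_id β)
    refine h.congr_deriv ?_
    simp only [id_eq]; ring
  have hn : HasDerivAt (fun x => c*(s*x-1)*x/uu c s x - (uu c s x - 1))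
      (((c*s*β + c*(s*β-1))*uu c s β - c*(s*β-1)*β*((2*c*s*β - 2*c)/(2*uu c s β)))/(uu c s β)^2
        - (2*c*s*β - 2*c)/(2*uu c s β)) β :=
    (hA.div (hasDerivAt_uu hc hcs β) hu.ne').sub ((hasDerivAt_uu hc hcs β).sub_const 1)
  have h := hn.div (hasDerivAt_pow 2 β) (pow_ne_zero 2 hβ)
  refine h.congr_deriv ?_
  have h2 : uu c s β ^ 2 = c*s*β^2 - 2*c*β + 1 := uu_sq hc hcs β
  have h3 : uu c s β ^ 3 = (c*s*β^2 - 2*c*β + 1) * uu c s β := by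
    rw [show (3:ℕ) = 2+1 from rfl, pow_succ, h2]
  have h4 : uu c s β ^ 4 = (c*s*β^2 - 2*c*β + 1)^2 := by
    rw [show (4:ℕ) = 2*2 from rfl, pow_mul, h2]
  have h5 : uu c s β ^ 5 = (c*s*β^2 - 2*c*β + 1)^2 * uu c s β := by
    rw [show (5:ℕ) = 4+1 from rfl, pow_succ, h4]
  have h6 : uu c s β ^ 6 = (c*s*β^2 - 2*c*β + 1)^3 := by
    rw [show (6:ℕ) = 2*3 from rfl, pow_mul, h2]
  have h7 : uu c s β ^ 7 = (c*s*β^2 - 2*c*β + 1)^3 * uu c s β := by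
    rw [show (7:ℕ) = 6+1 from rfl, pow_succ, h6]
  have h8 : uu c s β ^ 8 = (c*s*β^2 - 2*c*β + 1)^4 := by
    rw [show (8:ℕ) = 2*4 from rfl, pow_mul, h2]
  unfold f2
  push_cast
  field_simp
  ring_nf
  simp only [h2, h3, h4, h5, h6, h7, h8]
  ring

def KK (c s β : ℝ) : ℝ := β*(s-c)*(uu c s β + 1) - 2*(pp c s β)*(uu c s β + s*β - 1)

lemma hasDerivAt_KK {c s β : ℝ} (hc : 0 < c) (hcs : c < s) :
    HasDerivAt (fun x => KK c s x)
      ((s-c)*(uu c s β + 1) + β*(s-c)*((2*c*s*β - 2*c)/(2*uu c s β))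
        - (2*(2*c*s*β - 2*c)*(uu c s β + s*β - 1)
           + 2*(pp c s β)*((2*c*s*β - 2*c)/(2*uu c s β) + s))) β := by
  have h1 : HasDerivAt (fun x => x*(s-c)*(uu c s x + 1))
      (1*(s-c)*(uu c s β + 1) + β*(s-c)*((2*c*s*β - 2*c)/(2*uu c s β))) β := by
    have := (((hasDerivAt_id β).mul_const (s-c)).mul ((hasDerivAt_uu hc hcs β).add_const 1))
    refine this.congr_deriv ?_
    simp only [id_eq]
    all_goals ring
  have h2 : HasDerivAt (fun x => 2*(pp c s x)*(uu c s x + s*x - 1))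
      (2*(2*c*s*β - 2*c)*(uu c s β + s*β - 1)
        + 2*(pp c s β)*((2*c*s*β - 2*c)/(2*uu c s β) + s)) β := by
    have hg : HasDerivAt (fun x => uu c s x + s*x - 1)
        ((2*c*s*β - 2*c)/(2*uu c s β) + s) β := by
      have := ((hasDerivAt_uu hc hcs β).add ((hasDerivAt_id β).const_mul s)).sub_const 1
      refine this.congr_deriv ?_
      ring
    have := (((hasDerivAt_pp c s β).const_mul 2).mul hg)
    refine this.congr_deriv ?_
    all_goals ring
  have := h1.sub h2
  refine this.congr_deriv ?_
  ring

lemma Jpos {m u : ℝ} (h0 : 0 < u) (h1 : u < 1) (hm : m^2 < u^2) :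
    0 < 3*u^2 + 2*m*u - 2*m*u^2 + m^2 - 2*m^2*u - 2*m^2*u^2 := by
  nlinarith [mul_nonneg (mul_nonneg h0.le h0.le) (sub_nonneg.2 h1.le), mul_pos h0 h0,
    sq_nonneg (m+u), sq_nonneg (m-u), mul_nonneg (sub_nonneg.2 hm.le) (sub_nonneg.2 h1.le),
    sq_nonneg (m*u), mul_nonneg (sub_nonneg.2 hm.le) h0.le]

lemma sβ_lt_two {s β : ℝ} (hs : 0 < s) (h2 : β < 2/s) : s*β < 2 := by
  have := (lt_div_iff₀ hs).mp h2; linarith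

lemma uu_lt_one {c s β : ℝ} (hc : 0 < c) (hcs : c < s) (hβ : 0 < β) (h2 : β < 2/s) :
    uu c s β < 1 := by
  have hs : 0 < s := hc.trans hcs
  have hsβ := sβ_lt_two hs h2
  have hppl : pp c s β < 1 := by
    unfold pp; nlinarith [mul_pos hc hβ]
  nlinarith [uu_pos hc hcs β, uu_sq hc hcs β]

lemma msq_lt {c s β : ℝ} (hc : 0 < c) (hcs : c < s) (hβ : 0 < β) (h2 : β < 2/s) :
    (s*β - 1)^2 < uu c s β ^ 2 := by
  have hs : 0 < s := hc.trans hcs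
  have hsβ := sβ_lt_two hs h2
  have key : 0 < β*(s-c)*(2-s*β) := by
    apply mul_pos (mul_pos hβ (by linarith)); linarith
  rw [uu_sq hc hcs β]; unfold pp; nlinarith

lemma um_pos {c s β : ℝ} (hc : 0 < c) (hcs : c < s) (hβ : 0 < β) (h2 : β < 2/s) :
    0 < uu c s β + s*β - 1 := by
  have h1 := msq_lt hc hcs hβ h2
  have h0 := uu_pos hc hcs β
  nlinarith [sq_nonneg (uu c s β - (s*β-1)), sq_nonneg (uu c s β + (s*β-1))]

set_option maxHeartbeats 1000000 in
lemma derivRR_neg {c s β : ℝ} (hc : 0 < c) (hcs : c < s) (hβ : 0 < β) (h2 : β < 2/s) :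
    (((s-c)*(uu c s β + 1) + β*(s-c)*((2*c*s*β - 2*c)/(2*uu c s β))
        - (2*(2*c*s*β - 2*c)*(uu c s β + s*β - 1)
           + 2*(pp c s β)*((2*c*s*β - 2*c)/(2*uu c s β) + s))) * β^2
      - KK c s β * (2*β)) / (β^2)^2 < 0 := by
  have hs : 0 < s := hc.trans hcs
  have hu := uu_pos hc hcs β
  have hsβ := sβ_lt_two hs h2
  have hu1 := uu_lt_one hc hcs hβ h2
  have hum := um_pos hc hcs hβ h2
  have hJ := Jpos hu hu1 (msq_lt hc hcs hβ h2)
  have h2' : uu c s β ^ 2 = c*s*β^2 - 2*c*β + 1 := uu_sq hc hcs β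
  have h3 : uu c s β ^ 3 = (c*s*β^2 - 2*c*β + 1) * uu c s β := by
    rw [show (3:ℕ) = 2+1 from rfl, pow_succ, h2']
  have h4 : uu c s β ^ 4 = (c*s*β^2 - 2*c*β + 1)^2 := by
    rw [show (4:ℕ) = 2*2 from rfl, pow_mul, h2']
  have h5 : uu c s β ^ 5 = (c*s*β^2 - 2*c*β + 1)^2 * uu c s β := by
    rw [show (5:ℕ) = 4+1 from rfl, pow_succ, h4]
  have h6 : uu c s β ^ 6 = (c*s*β^2 - 2*c*β + 1)^3 := by
    rw [show (6:ℕ) = 2*3 from rfl, pow_mul, h2']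
  set U := uu c s β with hU
  set D := ((s-c)*(U + 1) + β*(s-c)*((2*c*s*β - 2*c)/(2*U))
        - (2*(2*c*s*β - 2*c)*(U + s*β - 1)
           + 2*(pp c s β)*((2*c*s*β - 2*c)/(2*U) + s)))*β - 2*KK c s β with hD
  have hID2 : (D * U) * (2-s*β)^2
      = (U - 1)*(U + s*β - 1)
        * (3*U^2 + 2*(s*β-1)*U - 2*(s*β-1)*U^2
           + (s*β-1)^2 - 2*(s*β-1)^2*U - 2*(s*β-1)^2*U^2) := by
    rw [hD]
    unfold KK pp
    rw [← hU]
    field_simp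
    ring_nf
    simp only [h2', h3, h4, h5, h6]
    ring
  have hrhs : (U - 1)*(U + s*β - 1)
        * (3*U^2 + 2*(s*β-1)*U - 2*(s*β-1)*U^2
           + (s*β-1)^2 - 2*(s*β-1)^2*U - 2*(s*β-1)^2*U^2) < 0 := by
    apply mul_neg_of_neg_of_pos _ hJ
    exact mul_neg_of_neg_of_pos (by linarith) hum
  have hpos : 0 < U * (2-s*β)^2 := by
    apply mul_pos hu
    have h22 : (0:ℝ) < 2 - s*β := by linarith
    positivity
  have hprod : D * (U * (2-s*β)^2) < 0 := by
    calc D * (U * (2-s*β)^2) = (D * U) * (2-s*β)^2 := by ring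
    _ < 0 := hID2 ▸ hrhs
  have hDneg : D < 0 := by
    by_contra hcon
    push_neg at hcon
    nlinarith [mul_nonneg hcon hpos.le]
  have heq : (((s-c)*(U + 1) + β*(s-c)*((2*c*s*β - 2*c)/(2*U))
        - (2*(2*c*s*β - 2*c)*(U + s*β - 1)
           + 2*(pp c s β)*((2*c*s*β - 2*c)/(2*U) + s))) * β^2
      - KK c s β * (2*β)) / (β^2)^2 = D / β^3 := by
    rw [hD]
    field_simp
  rw [heq]
  exact div_neg_of_neg_of_pos hDneg (by positivity)

lemma KK_cont (c s : ℝ) : Continuous (fun β => KK c s β) := by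
  unfold KK uu pp
  fun_prop

lemma KK_inv_pos {c s : ℝ} (hc : 0 < c) (hcs : c < s) : 0 < KK c s (1/s) := by
  have hs : 0 < s := hc.trans hcs
  have hppv : pp c s (1/s) = 1 - c/s := by unfold pp; field_simp; ring
  have hu0sq : uu c s (1/s) ^ 2 = 1 - c/s := by rw [← hppv]; exact uu_sq hc hcs _
  have hu0pos := uu_pos hc hcs (1/s)
  have hu01 : uu c s (1/s) < 1 := by nlinarith [div_pos hc hs]
  have h1s : 1/s*(s-c) = uu c s (1/s)^2 := by rw [hu0sq]; field_simp
  unfold KK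
  rw [hppv]
  have hss : s*(1/s) = 1 := by field_simp
  rw [hss]
  nlinarith [mul_pos (mul_pos hu0pos hu0pos) (sub_pos.2 hu01)]

lemma KK_2inv_neg {c s : ℝ} (hc : 0 < c) (hcs : c < s) : KK c s (2/s) < 0 := by
  have hs : 0 < s := hc.trans hcs
  have hppv : pp c s (2/s) = 1 := by unfold pp; field_simp; ring
  have huv : uu c s (2/s) = 1 := by unfold uu; rw [hppv]; exact Real.sqrt_one
  unfold KK
  rw [huv, hppv]
  have hss : s*(2/s) = 2 := by field_simp
  rw [hss]
  have : 0 < c/s := div_pos hc hs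
  have h4 : (2/s)*(s-c)*(1+1) = 4 - 4*(c/s) := by field_simp; ring
  nlinarith

lemma f2_pos_of_KK_pos {c s x : ℝ} (hc : 0 < c) (hcs : c < s) (hx : 0 < x)
    (hK : 0 < KK c s x) : 0 < f2 c s x := by
  have hu := uu_pos hc hcs x
  have h2' : uu c s x ^ 2 = c*s*x^2 - 2*c*x + 1 := uu_sq hc hcs x
  have h3 : uu c s x ^ 3 = (c*s*x^2 - 2*c*x + 1) * uu c s x := by
    rw [show (3:ℕ) = 2+1 from rfl, pow_succ, h2']
  have h4 : uu c s x ^ 4 = (c*s*x^2 - 2*c*x + 1)^2 := by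
    rw [show (4:ℕ) = 2*2 from rfl, pow_mul, h2']
  have h5 : uu c s x ^ 5 = (c*s*x^2 - 2*c*x + 1)^2 * uu c s x := by
    rw [show (5:ℕ) = 4+1 from rfl, pow_succ, h4]
  have h6 : uu c s x ^ 6 = (c*s*x^2 - 2*c*x + 1)^3 := by
    rw [show (6:ℕ) = 2*3 from rfl, pow_mul, h2']
  have hE : (x^2*c*(s-c) - 2*x*c*(s*x-1)*(uu c s x)^2 + 2*(uu c s x - 1)*(uu c s x)^3)
      * (uu c s x + 1) = x*c*KK c s x := by
    unfold KK pp
    ring_nf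
    simp only [h2', h3, h4, h5, h6]
    ring
  have hf2eq : f2 c s x
      = (x^2*c*(s-c) - 2*x*c*(s*x-1)*(uu c s x)^2 + 2*(uu c s x - 1)*(uu c s x)^3)
        / ((uu c s x)^3 * x^3) := by
    unfold f2; field_simp
  have hEeq : (x^2*c*(s-c) - 2*x*c*(s*x-1)*(uu c s x)^2 + 2*(uu c s x - 1)*(uu c s x)^3)
      = x*c*KK c s x/(uu c s x + 1) := by
    rw [eq_div_iff (by positivity : uu c s x + 1 ≠ 0)]; exact hE
  rw [hf2eq, hEeq, div_div]
  apply div_pos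
  · exact mul_pos (mul_pos hx hc) hK
  · positivity

lemma f2_neg_of_KK_neg {c s x : ℝ} (hc : 0 < c) (hcs : c < s) (hx : 0 < x)
    (hK : KK c s x < 0) : f2 c s x < 0 := by
  have hu := uu_pos hc hcs x
  have h2' : uu c s x ^ 2 = c*s*x^2 - 2*c*x + 1 := uu_sq hc hcs x
  have h3 : uu c s x ^ 3 = (c*s*x^2 - 2*c*x + 1) * uu c s x := by
    rw [show (3:ℕ) = 2+1 from rfl, pow_succ, h2']
  have h4 : uu c s x ^ 4 = (c*s*x^2 - 2*c*x + 1)^2 := by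
    rw [show (4:ℕ) = 2*2 from rfl, pow_mul, h2']
  have h5 : uu c s x ^ 5 = (c*s*x^2 - 2*c*x + 1)^2 * uu c s x := by
    rw [show (5:ℕ) = 4+1 from rfl, pow_succ, h4]
  have h6 : uu c s x ^ 6 = (c*s*x^2 - 2*c*x + 1)^3 := by
    rw [show (6:ℕ) = 2*3 from rfl, pow_mul, h2']
  have hE : (x^2*c*(s-c) - 2*x*c*(s*x-1)*(uu c s x)^2 + 2*(uu c s x - 1)*(uu c s x)^3)
      * (uu c s x + 1) = x*c*KK c s x := by
    unfold KK pp
    ring_nf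
    simp only [h2', h3, h4, h5, h6]
    ring
  have hf2eq : f2 c s x
      = (x^2*c*(s-c) - 2*x*c*(s*x-1)*(uu c s x)^2 + 2*(uu c s x - 1)*(uu c s x)^3)
        / ((uu c s x)^3 * x^3) := by
    unfold f2; field_simp
  have hEeq : (x^2*c*(s-c) - 2*x*c*(s*x-1)*(uu c s x)^2 + 2*(uu c s x - 1)*(uu c s x)^3)
      = x*c*KK c s x/(uu c s x + 1) := by
    rw [eq_div_iff (by positivity : uu c s x + 1 ≠ 0)]; exact hE
  rw [hf2eq, hEeq, div_div]
  apply div_neg_of_neg_of_pos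
  · exact mul_neg_of_pos_of_neg (mul_pos hx hc) hK
  · positivity
end WModelAux

end

open WModelAux in
theorem wmodel_x1_inflection (q N x0 : ℝ)
    (hq0 : 0 < q) (hq1 : q < 1) (hN : 0 < N)
    (hx0 : 0 < x0) (hx0N : x0 < q * N)
    (harg : ∀ β ∈ Set.Ioo (0:ℝ) (2 / (q * N + x0)),
      0 < (β * q * N - 1)^2 - (β * x0 - 1)^2 + 1) :
    ∃ θ : ℝ, 1 / (q * N + x0) < θ ∧ θ < 2 / (q * N + x0) ∧
      ConvexOn ℝ (Set.Ioc 0 θ)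
        (fun β => q * N + (Real.sqrt ((β * q * N - 1)^2 - (β * x0 - 1)^2 + 1) - 1) / β) ∧
      ConcaveOn ℝ (Set.Ico θ (2 / (q * N + x0)))
        (fun β => q * N + (Real.sqrt ((β * q * N - 1)^2 - (β * x0 - 1)^2 + 1) - 1) / β) := by
  set c : ℝ := q*N - x0 with hc_def
  set s : ℝ := q*N + x0 with hs_def
  have hc : 0 < c := by simp [hc_def]; linarith
  have hcs : c < s := by simp [hc_def, hs_def]; linarith
  have hs : 0 < s := hc.trans hcs
  have hfun : (fun β => q * N + (Real.sqrt ((β * q * N - 1)^2 - (β * x0 - 1)^2 + 1) - 1) / β)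
      = fun β => ff (q*N) c s β := by
    funext β
    unfold ff uu pp
    rw [show (β * q * N - 1)^2 - (β * x0 - 1)^2 + 1 = c*s*β^2 - 2*c*β + 1 by
      rw [hc_def, hs_def]; ring]
  rw [hfun]
  -- find θ via IVT
  have hab : 1/s ≤ 2/s := by
    rw [div_le_div_iff₀ hs hs]; nlinarith
  have hivt := intermediate_value_Ioo' hab (KK_cont c s).continuousOn
  have h0mem : (0:ℝ) ∈ Set.Ioo (KK c s (2/s)) (KK c s (1/s)) :=
    ⟨KK_2inv_neg hc hcs, KK_inv_pos hc hcs⟩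
  obtain ⟨θ, hθmem, hθK'⟩ := hivt h0mem
  have hθK : KK c s θ = 0 := hθK'
  have hθ1 : 1/s < θ := hθmem.1
  have hθ2 : θ < 2/s := hθmem.2
  have hθ0 : 0 < θ := lt_trans (by positivity) hθ1
  -- strict antitonicity of K x / x^2
  have hRanti : StrictAntiOn (fun x => KK c s x / x^2) (Set.Ioo 0 (2/s)) := by
    apply strictAntiOn_of_deriv_neg (convex_Ioo _ _)
    · intro x hx
      exact (((hasDerivAt_KK hc hcs).div (hasDerivAt_pow 2 x)
        (pow_ne_zero 2 hx.1.ne')).continuousAt).continuousWithinAt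
    · intro x hx
      rw [interior_Ioo] at hx
      have hder := (hasDerivAt_KK (β := x) hc hcs).div (hasDerivAt_pow 2 x)
        (pow_ne_zero 2 hx.1.ne')
      rw [show deriv (fun x => KK c s x / x ^ 2) x = _ from hder.deriv]
      have hgoal := derivRR_neg hc hcs hx.1 hx.2
      convert hgoal using 3
      push_cast; ring
  have hRθ : KK c s θ / θ^2 = 0 := by rw [hθK, zero_div]
  have hKpos : ∀ x, 0 < x → x < θ → 0 < KK c s x := by
    intro x hx0 hxθ
    have hR : KK c s θ / θ^2 < KK c s x / x^2 := hRanti ⟨hx0, hxθ.trans hθ2⟩ ⟨hθ0, hθ2⟩ hxθ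
    rw [hRθ] at hR
    by_contra hcon
    push_neg at hcon
    have : KK c s x / x^2 ≤ 0 := div_nonpos_of_nonpos_of_nonneg hcon (by positivity)
    linarith
  have hKneg : ∀ x, θ < x → x < 2/s → KK c s x < 0 := by
    intro x hθx hx2
    have hR : KK c s x / x^2 < KK c s θ / θ^2 := hRanti ⟨hθ0, hθ2⟩ ⟨hθ0.trans hθx, hx2⟩ hθx
    rw [hRθ] at hR
    by_contra hcon
    push_neg at hcon
    have : 0 ≤ KK c s x / x^2 := div_nonneg hcon (by positivity)
    linarith
  refine ⟨θ, hθ1, hθ2, ?_, ?_⟩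
  · apply convexOn_of_hasDerivWithinAt2_nonneg (convex_Ioc 0 θ)
      (f' := fun x => f1 c s x) (f'' := fun x => f2 c s x)
    · intro x hx
      exact ((hasDerivAt_ff hc hcs hx.1.ne').continuousAt).continuousWithinAt
    · intro x hx
      rw [interior_Ioc] at hx
      exact (hasDerivAt_ff hc hcs hx.1.ne').hasDerivWithinAt
    · intro x hx
      rw [interior_Ioc] at hx
      exact (hasDerivAt_f1 hc hcs hx.1.ne').hasDerivWithinAt
    · intro x hx
      rw [interior_Ioc] at hx
      exact (f2_pos_of_KK_pos hc hcs hx.1 (hKpos x hx.1 hx.2)).le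
  · apply concaveOn_of_hasDerivWithinAt2_nonpos (convex_Ico θ (2/s))
      (f' := fun x => f1 c s x) (f'' := fun x => f2 c s x)
    · intro x hx
      have hx0 : 0 < x := lt_of_lt_of_le hθ0 hx.1
      exact ((hasDerivAt_ff hc hcs hx0.ne').continuousAt).continuousWithinAt
    · intro x hx
      rw [interior_Ico] at hx
      have hx0 : 0 < x := hθ0.trans hx.1
      exact (hasDerivAt_ff hc hcs hx0.ne').hasDerivWithinAt
    · intro x hx
      rw [interior_Ico] at hx
      have hx0 : 0 < x := hθ0.trans hx.1
      exact (hasDerivAt_f1 hc hcs hx0.ne').hasDerivWithinAt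
    · intro x hx
      rw [interior_Ico] at hx
      have hx0 : 0 < x := hθ0.trans hx.1
      exact (f2_neg_of_KK_neg hc hcs hx0 (hKneg x hx.1 hx.2)).le
end

section
/- If β < 2/(qN + x0), βqN > 1 > βx0 and x0 < qN, then x1 = qN + (sqrt((βqN-1)² - (βx0-1)² + 1) - 1)/β < qN, i.e. only a strict subset of interested users ultimately watch the video. -/
theorem wmodel_insufficient (β q N x0 : ℝ)
    (hβ : 0 < β) (hq0 : 0 < q) (hq1 : q < 1) (hN : 0 < N)
    (hx0 : 0 < x0) (hx0N : x0 < q * N)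
    (hβqN : 1 < β * q * N) (hβx0 : β * x0 < 1)
    (harg : 0 < (β * q * N - 1)^2 - (β * x0 - 1)^2 + 1)
    (hβsmall : β < 2 / (q * N + x0)) :
    q * N + (Real.sqrt ((β * q * N - 1)^2 - (β * x0 - 1)^2 + 1) - 1) / β < q * N := by
  have hsum : 0 < q * N + x0 := by positivity
  have h2 : β * (q * N + x0) < 2 := by
    rw [div_eq_mul_inv] at hβsmall
    calc β * (q * N + x0) < 2 * (q * N + x0)⁻¹ * (q * N + x0) := by
          exact mul_lt_mul_of_pos_right hβsmall hsum
      _ = 2 := by field_simp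
  have hlt1 : (β * q * N - 1)^2 - (β * x0 - 1)^2 + 1 < 1 := by nlinarith
  have hs : Real.sqrt ((β * q * N - 1)^2 - (β * x0 - 1)^2 + 1) < 1 := by
    have := Real.sqrt_lt_sqrt harg.le hlt1
    simpa using this
  have : (Real.sqrt ((β * q * N - 1)^2 - (β * x0 - 1)^2 + 1) - 1) / β < 0 :=
    div_neg_of_neg_of_pos (by linarith) hβ
  linarith
end

section
/- Suppose v'(t) = v(t)(βqs(t) - 1) and s'(t) = -v(t)/q with v(0) > 0 and βq s(0) > 1, and s(t) is strictly decreasing to a limit s∞ with βq s∞ < 1. Then there is a unique time t* > 0 with βq s(t*) = 1, v is strictly increasing on [0, t*) and strictly decreasing on (t*, ∞); i.e. the popularity curve is unimodal. -/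
theorem wmodel_unimodal (β q sInf : ℝ) (v s : ℝ → ℝ)
    (hβ : 0 < β) (hq0 : 0 < q) (hq1 : q < 1)
    (hv : ∀ t, HasDerivAt v (v t * (β * q * s t - 1)) t)
    (hs : ∀ t, HasDerivAt s (-(v t) / q) t)
    (hv0 : 0 < v 0) (hs0 : 1 < β * q * s 0)
    (hsanti : StrictAnti s)
    (hslim : Filter.Tendsto s Filter.atTop (nhds sInf))
    (hsInf : β * q * sInf < 1) :
    ∃ tstar : ℝ, 0 < tstar ∧ β * q * s tstar = 1 ∧
      (∀ t, 0 < t → β * q * s t = 1 → t = tstar) ∧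
      StrictMonoOn v (Set.Ico 0 tstar) ∧
      StrictAntiOn v (Set.Ioi tstar) := by
  have hvdiff : Differentiable ℝ v := fun t => (hv t).differentiableAt
  have hsdiff : Differentiable ℝ s := fun t => (hs t).differentiableAt
  have hscont : Continuous s := hsdiff.continuous
  have hvcont : Continuous v := hvdiff.continuous
  -- g : the growth-rate
  set g : ℝ → ℝ := fun t => β * q * s t - 1 with hg
  have hgcont : Continuous g := by continuity
  -- antiderivative of g
  set G : ℝ → ℝ := fun t => ∫ x in (0:ℝ)..t, g x with hGdef
  have hG : ∀ t, HasDerivAt G (g t) t := by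
    intro t
    exact intervalIntegral.integral_hasDerivAt_right
      (hgcont.intervalIntegrable _ _)
      (hgcont.stronglyMeasurable.stronglyMeasurableAtFilter)
      hgcont.continuousAt
  -- v t = v 0 * exp (G t) hence v > 0
  have hvpos : ∀ t, 0 < v t := by
    have hF : ∀ t, HasDerivAt (fun t => v t * Real.exp (-(G t)))
        (0 : ℝ) t := by
      intro t
      have h1 : HasDerivAt (fun t => Real.exp (-(G t)))
          (Real.exp (-(G t)) * (-(g t))) t := ((hG t).neg).exp
      have := (hv t).fun_mul h1
      refine this.congr_deriv ?_
      simp only [hg]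
      ring
    have hconst : ∀ t, v t * Real.exp (-(G t)) = v 0 * Real.exp (-(G 0)) := by
      intro t
      exact is_const_of_deriv_eq_zero
        (fun x => ((hF x).differentiableAt))
        (fun x => (hF x).deriv) t 0
    intro t
    have h := hconst t
    have he : 0 < Real.exp (-(G t)) := Real.exp_pos _
    have h0 : 0 < v 0 * Real.exp (-(G 0)) := mul_pos hv0 (Real.exp_pos _)
    nlinarith
  -- find T with β q s T < 1
  have hbq : 0 < β * q := mul_pos hβ hq0
  have hev : ∀ᶠ t in Filter.atTop, β * q * s t < 1 := by
    have : Filter.Tendsto (fun t => β * q * s t) Filter.atTop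
        (nhds (β * q * sInf)) := hslim.const_mul _
    exact this.eventually_lt_const hsInf
  obtain ⟨T, hT⟩ := hev.exists
  have hT0 : (0:ℝ) ≤ T := by
    by_contra h
    push_neg at h
    have := hsanti h
    nlinarith
  -- IVT
  have hone : (1:ℝ) ∈ Set.Icc (β * q * s T) (β * q * s 0) :=
    ⟨le_of_lt hT, le_of_lt hs0⟩
  have hmap := intermediate_value_Icc' hT0
    ((continuous_const.mul hscont).continuousOn) hone
  obtain ⟨tstar, htmem, htstar⟩ := hmap
  have htstar : β * q * s tstar = 1 := htstar
  have htpos : 0 < tstar := by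
    rcases lt_or_eq_of_le htmem.1 with h | h
    · exact h
    · exfalso; rw [← h] at htstar; linarith
  refine ⟨tstar, htpos, htstar, ?_, ?_, ?_⟩
  · -- uniqueness
    intro t ht h1
    by_contra hne
    rcases lt_or_gt_of_ne hne with h | h
    · have := hsanti h; nlinarith
    · have := hsanti h; nlinarith
  · -- strict mono on Ico 0 tstar
    apply strictMonoOn_of_deriv_pos (convex_Ico 0 tstar) hvcont.continuousOn
    intro x hx
    rw [interior_Ico] at hx
    rw [(hv x).deriv]
    have hsx : s tstar < s x := hsanti hx.2
    have : 1 < β * q * s x := by nlinarith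
    have := hvpos x
    nlinarith
  · -- strict anti on Ioi tstar
    apply strictAntiOn_of_deriv_neg (convex_Ioi tstar) hvcont.continuousOn
    intro x hx
    rw [interior_Ioi] at hx
    rw [(hv x).deriv]
    have hsx : s x < s tstar := hsanti hx
    have : β * q * s x < 1 := by nlinarith
    have := hvpos x
    nlinarith
end
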